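/- A differentiable convex function f : ℝ^d → ℝ has a globally Lipschitz gradient with constant K > 0 if and only if f is (1/K)-cocoercive, i.e., (x − x')ᵀ(∇f(x) − ∇f(x')) ≥ (1/K)‖∇f(x) − ∇f(x')‖² for all x, x' ∈ ℝ^d. -/

import Mathlib

open RealInnerProductSpace

section helpers
variable {d : ℕ} {f : EuclideanSpace ℝ (Fin d) → ℝ}
  {f' : EuclideanSpace ℝ (Fin d) → EuclideanSpace ℝ (Fin d)}

lemma bh_line_deriv (hdiff : ∀ x, HasGradientAt f (f' x) x)
    (x v : EuclideanSpace ℝ (Fin d)) (t : ℝ) :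
    HasDerivAt (fun s : ℝ => f (x + s • v)) ⟪f' (x + t • v), v⟫ t := by
  have h1 : HasDerivAt (fun s : ℝ => x + s • v) v t := by
    simpa using ((hasDerivAt_id t).smul_const v).const_add x
  have := ((hdiff (x + t • v)).hasFDerivAt).comp_hasDerivAt t h1
  simp [InnerProductSpace.toDual_apply_apply, Function.comp_def] at this
  exact this

lemma bh_grad_ineq (hdiff : ∀ x, HasGradientAt f (f' x) x)
    (hconv : ConvexOn ℝ Set.univ f) (x y : EuclideanSpace ℝ (Fin d)) :
    f x + ⟪f' x, y - x⟫ ≤ f y := by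
  set v := y - x with hv
  have hg : ConvexOn ℝ Set.univ (fun t : ℝ => f (x + t • v)) := by
    have h := hconv.comp_affineMap (AffineMap.lineMap x y)
    simp only [Set.preimage_univ] at h
    have e : (fun t : ℝ => f (x + t • v)) = f ∘ ⇑(AffineMap.lineMap (k := ℝ) x y) := by
      funext t
      simp [AffineMap.lineMap_apply, hv, add_comm]
    rw [e]
    exact h
  have hd0 := bh_line_deriv hdiff x v 0
  have hx0 : x + (0:ℝ) • v = x := by simp
  rw [hx0] at hd0
  have := hg.le_slope_of_hasDerivAt (Set.mem_univ (0:ℝ)) (Set.mem_univ (1:ℝ))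
    zero_lt_one hd0
  have hsl : slope (fun t : ℝ => f (x + t • v)) 0 1 = f y - f x := by
    simp [slope_def_field, hv]
  rw [hsl] at this
  rw [hv] at this
  linarith

lemma bh_descent (hdiff : ∀ x, HasGradientAt f (f' x) x) {K : ℝ} (hK : 0 < K)
    (hL : LipschitzWith (Real.toNNReal K) f') (x y : EuclideanSpace ℝ (Fin d)) :
    f y ≤ f x + ⟪f' x, y - x⟫ + K / 2 * ‖y - x‖ ^ 2 := by
  set v := y - x with hv
  set h : ℝ → ℝ := fun t => f x + t * ⟪f' x, v⟫ + K / 2 * ‖v‖ ^ 2 * t ^ 2 - f (x + t • v)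
    with hh
  have hder : ∀ t : ℝ, HasDerivAt h (⟪f' x, v⟫ + K * ‖v‖ ^ 2 * t - ⟪f' (x + t • v), v⟫) t := by
    intro t
    have h1 : HasDerivAt (fun s : ℝ => f x + s * ⟪f' x, v⟫ + K / 2 * ‖v‖ ^ 2 * s ^ 2)
        (⟪f' x, v⟫ + K * ‖v‖ ^ 2 * t) t := by
      have := (((hasDerivAt_id t).mul_const ⟪f' x, v⟫).const_add (f x)).add
        (((hasDerivAt_pow 2 t)).const_mul (K / 2 * ‖v‖ ^ 2))
      exact this.congr_deriv (by rw [show (2:ℕ) - 1 = 1 from rfl]; push_cast; ring)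
    exact h1.sub (bh_line_deriv hdiff x v t)
  have hlip : ∀ a b : EuclideanSpace ℝ (Fin d), ‖f' a - f' b‖ ≤ K * ‖a - b‖ := by
    intro a b
    have := hL.dist_le_mul a b
    simpa [dist_eq_norm, Real.coe_toNNReal K hK.le] using this
  have hmono : MonotoneOn h (Set.Icc (0:ℝ) 1) := by
    apply monotoneOn_of_deriv_nonneg (convex_Icc 0 1)
    · exact fun t _ => ((hder t).differentiableAt).continuousAt.continuousWithinAt
    · exact fun t _ => ((hder t).differentiableAt).differentiableWithinAt
    · intro t ht
      rw [interior_Icc] at ht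
      rw [(hder t).deriv]
      have h2 : ⟪f' (x + t • v) - f' x, v⟫ ≤ K * t * ‖v‖ ^ 2 := by
        calc ⟪f' (x + t • v) - f' x, v⟫ ≤ ‖f' (x + t • v) - f' x‖ * ‖v‖ :=
              real_inner_le_norm _ _
          _ ≤ K * ‖(x + t • v) - x‖ * ‖v‖ := by
              have := hlip (x + t • v) x
              nlinarith [norm_nonneg v]
          _ = K * t * ‖v‖ ^ 2 := by
              rw [add_sub_cancel_left, norm_smul]
              simp [abs_of_pos ht.1]
              ring
      rw [inner_sub_left] at h2
      linarith
  have hmono01 := hmono (Set.left_mem_Icc.mpr zero_le_one) (Set.right_mem_Icc.mpr zero_le_one)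
    zero_le_one
  have hy : x + (1:ℝ) • v = y := by simp [hv]
  have hA : h 0 = 0 := by simp [hh]
  have hB : h 1 = f x + ⟪f' x, v⟫ + K / 2 * ‖v‖ ^ 2 - f y := by
    simp only [hh, hy, one_pow, mul_one, one_mul]
  rw [hA, hB] at hmono01
  linarith

lemma bh_key (hdiff : ∀ x, HasGradientAt f (f' x) x)
    (hconv : ConvexOn ℝ Set.univ f) {K : ℝ} (hK : 0 < K)
    (hL : LipschitzWith (Real.toNNReal K) f') (x y : EuclideanSpace ℝ (Fin d)) :
    f x + ⟪f' x, y - x⟫ + 1 / (2 * K) * ‖f' y - f' x‖ ^ 2 ≤ f y := by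
  set g := f' y - f' x with hg
  set z := y - (1 / K) • g with hz
  have h1 := bh_grad_ineq hdiff hconv x z
  have h2 := bh_descent hdiff hK hL y z
  have e1 : ⟪f' x, z - x⟫ = ⟪f' x, y - x⟫ - (1 / K) * ⟪f' x, g⟫ := by
    rw [hz]
    rw [show y - (1 / K) • g - x = (y - x) - (1 / K) • g by abel]
    rw [inner_sub_right, real_inner_smul_right]
  have e2 : ⟪f' y, z - y⟫ = -(1 / K) * ⟪f' y, g⟫ := by
    rw [hz, show y - (1 / K) • g - y = -((1 / K) • g) by abel, inner_neg_right,
      real_inner_smul_right]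
    ring
  have e3 : ‖z - y‖ ^ 2 = (1 / K) ^ 2 * ‖g‖ ^ 2 := by
    rw [hz, show y - (1 / K) • g - y = -((1 / K) • g) by abel, norm_neg, norm_smul,
      Real.norm_eq_abs, abs_of_pos (by positivity : (0:ℝ) < 1 / K), mul_pow]
  rw [e1] at h1
  rw [e2, e3] at h2
  have hKe : K / 2 * ((1 / K) ^ 2 * ‖g‖ ^ 2) = 1 / (2 * K) * ‖g‖ ^ 2 := by
    field_simp
  rw [hKe] at h2
  have e5 : 1 / K * ⟪f' y, g⟫ - 1 / K * ⟪f' x, g⟫ = 1 / K * ‖g‖ ^ 2 := by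
    rw [← mul_sub, ← inner_sub_left, ← hg, real_inner_self_eq_norm_sq]
  have e6 : 1 / K * ‖g‖ ^ 2 = 2 * (1 / (2 * K) * ‖g‖ ^ 2) := by ring
  linarith

end helpers

/-- A differentiable convex function `f : ℝ^d → ℝ` has a globally Lipschitz
gradient with constant `K > 0` iff `f` is `(1/K)`-cocoercive. -/
theorem lipschitz_gradient_iff_cocoercive
    {d : ℕ} (f : EuclideanSpace ℝ (Fin d) → ℝ)
    (f' : EuclideanSpace ℝ (Fin d) → EuclideanSpace ℝ (Fin d))
    (hdiff : ∀ x, HasGradientAt f (f' x) x)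
    (hconv : ConvexOn ℝ Set.univ f)
    (K : ℝ) (hK : 0 < K) :
    LipschitzWith (Real.toNNReal K) f' ↔
      ∀ x x', (1 / K) * ‖f' x - f' x'‖ ^ 2 ≤ ⟪x - x', f' x - f' x'⟫ := by
  constructor
  · intro hL x x'
    have h1 := bh_key hdiff hconv hK hL x x'
    have h2 := bh_key hdiff hconv hK hL x' x
    have e1 : ⟪f' x', x - x'⟫ = ⟪x - x', f' x'⟫ := real_inner_comm _ _
    have e2 : ⟪f' x, x' - x⟫ = -⟪x - x', f' x⟫ := by
      rw [real_inner_comm, show x' - x = -(x - x') by abel, inner_neg_left]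
    have e3 : ‖f' x - f' x'‖ = ‖f' x' - f' x‖ := norm_sub_rev _ _
    have e4 : ⟪x - x', f' x - f' x'⟫ = ⟪x - x', f' x⟫ - ⟪x - x', f' x'⟫ := inner_sub_right _ _ _
    rw [e4]
    rw [e3]
    rw [e1] at h2
    rw [e2] at h1
    rw [e3] at h2
    have h6 : 1 / K * ‖f' x' - f' x‖ ^ 2 = 2 * (1 / (2 * K) * ‖f' x' - f' x‖ ^ 2) := by ring
    linarith
  · intro hco
    apply LipschitzWith.of_dist_le_mul
    intro x x'
    have h := hco x x'
    have CS : ⟪x - x', f' x - f' x'⟫ ≤ ‖x - x'‖ * ‖f' x - f' x'‖ := real_inner_le_norm _ _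
    rw [dist_eq_norm, dist_eq_norm, Real.coe_toNNReal K hK.le]
    rcases eq_or_lt_of_le (norm_nonneg (f' x - f' x')) with h0 | h0
    · rw [← h0]; positivity
    · have key : ‖f' x - f' x'‖ ^ 2 ≤ K * ‖x - x'‖ * ‖f' x - f' x'‖ := by
        have h5 := mul_le_mul_of_nonneg_left (le_trans h CS) hK.le
        calc ‖f' x - f' x'‖ ^ 2 = K * (1 / K * ‖f' x - f' x'‖ ^ 2) := by field_simp
          _ ≤ K * (‖x - x'‖ * ‖f' x - f' x'‖) := h5
          _ = K * ‖x - x'‖ * ‖f' x - f' x'‖ := by ring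
      rw [← mul_le_mul_iff_of_pos_right h0]
      nlinarith [key]
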